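/- A function between standard Borel spaces whose graph is an analytic subset of the product is a Borel function. -/
import Mathlib


/-- A subset of a measurable space is *analytic* if it is the image of a Borel
subset of Baire space under a Borel map. -/
def IsAnalyticSet {X : Type*} [MeasurableSpace X] (s : Set X) : Prop :=
  ∃ (B : Set (ℕ → ℕ)) (f : (ℕ → ℕ) → X), MeasurableSet B ∧ Measurable f ∧ f '' B = s

/-- A function between standard Borel spaces whose graph is an analytic subset
of the product is a Borel function. -/
theorem measurable_of_analytic_graph
    {X Y : Type*} [MeasurableSpace X] [StandardBorelSpace X]
    [MeasurableSpace Y] [StandardBorelSpace Y]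
    (f : X → Y) (h : IsAnalyticSet {p : X × Y | p.2 = f p.1}) :
    Measurable f := by
  letI := upgradeStandardBorel X
  letI := upgradeStandardBorel Y
  obtain ⟨B, g, hB, hg, hgB⟩ := h
  -- key: for any s : Set Y, f ⁻¹' s is the image of a Borel set under fst ∘ g
  have key : ∀ s : Set Y, f ⁻¹' s =
      (fun n => (g n).1) '' (B ∩ g ⁻¹' (Prod.snd ⁻¹' s)) := by
    intro s
    ext x
    constructor
    · intro hx
      have : (x, f x) ∈ g '' B := by rw [hgB]; simp
      obtain ⟨n, hn, hgn⟩ := this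
      exact ⟨n, ⟨hn, by simp [hgn]; exact hx⟩, by simp [hgn]⟩
    · rintro ⟨n, ⟨hnB, hns⟩, rfl⟩
      have h2 : (g n).2 = f (g n).1 := by
        have := Set.mem_image_of_mem g hnB
        rw [hgB] at this
        exact this
      simpa [Set.mem_preimage, h2] using hns
  have anal : ∀ s : Set Y, MeasurableSet s → MeasureTheory.AnalyticSet (f ⁻¹' s) := by
    intro s hs
    rw [key s]
    exact (hB.inter (hg (measurable_snd hs))).analyticSet_image (measurable_fst.comp hg)
  intro s hs
  have h1 := anal s hs
  have h2 := anal sᶜ hs.compl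
  rw [Set.preimage_compl] at h2
  exact h1.measurableSet_of_compl h2
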